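/- If Q ~ χ²_n (chi-squared with n degrees of freedom), then for all t > 0, P(Q ≥ n + 2√(nt) + 2t) ≤ e^{−t}; and consequently, since 2√(nt) ≤ n + t, P(Q ≥ 2n + 3t) ≤ e^{−t}. -/

import Mathlib

open MeasureTheory ProbabilityTheory Real
open scoped ENNReal NNReal

lemma LM_integrable_exp_sq {l : ℝ} (hl : l < 1/2) :
    Integrable (fun x => exp (l * x ^ 2)) (gaussianReal 0 1) := by
  rw [gaussianReal_of_var_ne_zero _ one_ne_zero, gaussianPDF_def]
  have hmk : ∀ x : ℝ, ENNReal.ofReal (gaussianPDFReal 0 1 x)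
      = ((gaussianPDFReal 0 1 x).toNNReal : ℝ≥0∞) := fun x => rfl
  simp_rw [hmk]
  rw [integrable_withDensity_iff_integrable_smul₀
    (measurable_gaussianPDFReal 0 1).real_toNNReal.aemeasurable]
  have : ∀ x : ℝ, ((gaussianPDFReal 0 1 x).toNNReal : ℝ≥0) • exp (l * x ^ 2)
      = (√(2 * π))⁻¹ * exp (-(1/2 - l) * x ^ 2) := by
    intro x
    simp only [NNReal.smul_def, smul_eq_mul,
      Real.coe_toNNReal _ (gaussianPDFReal_nonneg 0 1 x)]
    simp only [gaussianPDFReal, NNReal.coe_one, mul_one, sub_zero]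
    rw [mul_assoc, ← Real.exp_add]
    ring_nf
  simp_rw [this]
  exact (integrable_exp_neg_mul_sq (by linarith)).const_mul _

lemma LM_integral_exp_sq {l : ℝ} (hl : l < 1/2) :
    ∫ x, exp (l * x ^ 2) ∂(gaussianReal 0 1) = (Real.sqrt (1 - 2*l))⁻¹ := by
  rw [gaussianReal_of_var_ne_zero _ one_ne_zero, gaussianPDF_def]
  have hmk : ∀ x : ℝ, ENNReal.ofReal (gaussianPDFReal 0 1 x)
      = ((gaussianPDFReal 0 1 x).toNNReal : ℝ≥0∞) := fun x => rfl
  simp_rw [hmk]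
  rw [integral_withDensity_eq_integral_smul (measurable_gaussianPDFReal 0 1).real_toNNReal]
  have h1 : ∀ x : ℝ, ((gaussianPDFReal 0 1 x).toNNReal : ℝ≥0) • exp (l * x ^ 2)
      = (√(2 * π))⁻¹ * exp (-(1/2 - l) * x ^ 2) := by
    intro x
    simp only [NNReal.smul_def, smul_eq_mul,
      Real.coe_toNNReal _ (gaussianPDFReal_nonneg 0 1 x)]
    simp only [gaussianPDFReal, NNReal.coe_one, mul_one, sub_zero]
    rw [mul_assoc, ← Real.exp_add]
    ring_nf
  simp_rw [h1]
  rw [integral_const_mul, integral_gaussian]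
  have hπ : 0 < π := pi_pos
  have h2 : (0:ℝ) < 1/2 - l := by linarith
  have h3 : (1:ℝ) - 2*l = 2 * (1/2 - l) := by ring
  rw [h3, Real.sqrt_mul (by norm_num : (0:ℝ) ≤ 2) π,
    Real.sqrt_mul (by norm_num : (0:ℝ) ≤ 2) (1/2-l), Real.sqrt_div pi_pos.le]
  have e2 : √2 ≠ 0 := by positivity
  have eπ : √π ≠ 0 := by positivity
  have ec : √(1/2 - l) ≠ 0 := by positivity
  rw [mul_inv, div_eq_mul_inv, mul_inv]
  calc (√2)⁻¹ * (√π)⁻¹ * (√π * (√(1/2-l))⁻¹)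
      = ((√π)⁻¹ * √π) * ((√2)⁻¹ * (√(1/2-l))⁻¹) := by ring
    _ = (√2)⁻¹ * (√(1/2-l))⁻¹ := by rw [inv_mul_cancel₀ eπ, one_mul]

lemma LM_iIndepFun_ae_eq {Ω ι : Type*} [MeasurableSpace Ω] {μ : Measure Ω} {f g : ι → Ω → ℝ}
    (hf : iIndepFun f μ) (h : ∀ i, f i =ᵐ[μ] g i) :
    iIndepFun g μ := by
  rw [iIndepFun_iff_measure_inter_preimage_eq_mul] at hf ⊢
  intro S sets hsets
  have hpre : ∀ i, (f i ⁻¹' sets i : Set Ω) =ᵐ[μ] (g i ⁻¹' sets i : Set Ω) := by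
    intro i
    filter_upwards [h i] with ω hω
    show (f i ω ∈ sets i) = (g i ω ∈ sets i)
    rw [hω]
  have hinter : (⋂ i ∈ S, f i ⁻¹' sets i : Set Ω) =ᵐ[μ] (⋂ i ∈ S, g i ⁻¹' sets i : Set Ω) := by
    filter_upwards [(ae_ball_iff S.countable_toSet).2 fun i _ => h i] with ω hω
    show (ω ∈ ⋂ i ∈ S, f i ⁻¹' sets i) = (ω ∈ ⋂ i ∈ S, g i ⁻¹' sets i)
    simp only [Set.mem_iInter, Set.mem_preimage]
    exact eq_iff_iff.2 ⟨fun H i hi => (hω i hi) ▸ H i hi,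
      fun H i hi => (hω i hi).symm ▸ H i hi⟩
  rw [← measure_congr hinter, hf S hsets]
  exact Finset.prod_congr rfl fun i _ => measure_congr (hpre i)

lemma LM_calc {N u t : ℝ} (hN : 0 < N) (ht : 0 < t)
    (hu : u = 2 * Real.sqrt (N * t) + 2 * t) (n : ℕ) (hn : (n : ℝ) = N) :
    exp (-(u / (2 * (N + u))) * (N + u))
      * ((Real.sqrt (1 - 2 * (u / (2 * (N + u)))))⁻¹) ^ n ≤ exp (-t) := by
  set s : ℝ := Real.sqrt (t / N) with hs_def
  have hs0 : 0 < s := Real.sqrt_pos.2 (div_pos ht hN)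
  have hst : N * s ^ 2 = t := by
    rw [hs_def, Real.sq_sqrt (div_nonneg ht.le hN.le)]
    field_simp
  have hsq : Real.sqrt (N * t) = N * s := by
    rw [hs_def, show t / N = (N * t) / N ^ 2 by field_simp,
      Real.sqrt_div (mul_nonneg hN.le ht.le), Real.sqrt_sq hN.le]
    field_simp
  have hu' : u = 2 * N * s + 2 * N * s ^ 2 := by rw [hu, hsq, ← hst]; ring
  have hu0 : 0 < u := by nlinarith
  have hNu : 0 < N + u := by linarith
  have hla : -(u / (2 * (N + u))) * (N + u) = -(u / 2) := by field_simp
  have hc : 1 - 2 * (u / (2 * (N + u))) = N / (N + u) := by field_simp; ring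
  have hcpos : 0 < N / (N + u) := div_pos hN hNu
  have hinv : (Real.sqrt (N / (N + u)))⁻¹ = exp (-(Real.log (N / (N + u)) / 2)) := by
    rw [← Real.log_sqrt hcpos.le, Real.exp_neg, Real.exp_log (Real.sqrt_pos.2 hcpos)]
  rw [hla, hc, hinv, ← Real.exp_nat_mul, ← Real.exp_add, Real.exp_le_exp]
  have hlog : Real.log (N / (N + u)) = -Real.log ((N + u) / N) := by
    rw [← Real.log_inv]
    congr 1
    field_simp
  have hlog2 : Real.log ((N + u) / N) ≤ 2 * s := by
    rw [Real.log_le_iff_le_exp (div_pos hNu hN)]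
    have h1 : (N + u) / N = 1 + 2 * s + 2 * s ^ 2 := by
      rw [hu']; field_simp; ring
    have h2 := Real.quadratic_le_exp_of_nonneg (by positivity : (0:ℝ) ≤ 2 * s)
    rw [h1]
    nlinarith
  rw [hlog, hn]
  nlinarith [mul_le_mul_of_nonneg_left hlog2 (by positivity : (0:ℝ) ≤ N / 2)]


/-- Laurent–Massart tail bound for a chi-squared variable `Q ~ χ²_n` (a sum of `n`
independent squared standard Gaussians): for `t > 0`,
`P(Q ≥ n + 2√(nt) + 2t) ≤ e^{−t}` and consequently `P(Q ≥ 2n + 3t) ≤ e^{−t}`. -/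
theorem chi_squared_tail_bound {Ω : Type*} [MeasurableSpace Ω] (μ : Measure Ω)
    [IsProbabilityMeasure μ] (n : ℕ) (X : Fin n → Ω → ℝ)
    (hindep : iIndepFun X μ)
    (hgauss : ∀ i, Measure.map (X i) μ = gaussianReal 0 1)
    (t : ℝ) (ht : 0 < t) :
    μ {ω | (n : ℝ) + 2 * Real.sqrt (n * t) + 2 * t ≤ ∑ i, (X i ω) ^ 2}
      ≤ ENNReal.ofReal (exp (-t)) ∧
    μ {ω | 2 * (n : ℝ) + 3 * t ≤ ∑ i, (X i ω) ^ 2} ≤ ENNReal.ofReal (exp (-t)) := by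
  have amgm : 2 * Real.sqrt ((n : ℝ) * t) ≤ (n : ℝ) + t := by
    have h1 := two_mul_le_add_sq (Real.sqrt (n : ℝ)) (Real.sqrt t)
    rw [Real.sqrt_mul (Nat.cast_nonneg n) t]
    nlinarith [Real.sq_sqrt (Nat.cast_nonneg n : (0:ℝ) ≤ n), Real.sq_sqrt ht.le,
      Real.sqrt_nonneg (n:ℝ), Real.sqrt_nonneg t]
  have key : μ {ω | (n : ℝ) + 2 * Real.sqrt (n * t) + 2 * t ≤ ∑ i, (X i ω) ^ 2}
      ≤ ENNReal.ofReal (exp (-t)) := by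
    rcases Nat.eq_zero_or_pos n with hn | hn
    · subst hn
      have hempty : {ω : Ω | (0 : ℕ) + 2 * Real.sqrt ((0:ℕ) * t) + 2 * t
          ≤ ∑ i : Fin 0, (X i ω) ^ 2} = ∅ := by
        ext ω
        simp only [Set.mem_setOf_eq, Set.mem_empty_iff_false, iff_false, not_le,
          Nat.cast_zero, zero_mul, Real.sqrt_zero, mul_zero, zero_add, Finset.univ_eq_empty,
          Finset.sum_empty]
        linarith
      rw [hempty]
      simp
    -- positive n
    have hXm : ∀ i, AEMeasurable (X i) μ := by
      intro i
      by_contra h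
      have h0 := Measure.map_of_not_aemeasurable h
      rw [hgauss i] at h0
      exact (IsProbabilityMeasure.ne_zero (gaussianReal 0 1)) h0
    set Y : Fin n → Ω → ℝ := fun i => (hXm i).mk (X i) with hY_def
    have hYm : ∀ i, Measurable (Y i) := fun i => (hXm i).measurable_mk
    have hae : ∀ i, X i =ᵐ[μ] Y i := fun i => (hXm i).ae_eq_mk
    have hmapY : ∀ i, Measure.map (Y i) μ = gaussianReal 0 1 := fun i => by
      rw [← Measure.map_congr (hae i), hgauss i]
    have hindepY : iIndepFun Y μ := LM_iIndepFun_ae_eq hindep hae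
    set N : ℝ := (n : ℝ) with hN_def
    have hN : 0 < N := by rw [hN_def]; exact_mod_cast hn
    set u : ℝ := 2 * Real.sqrt (N * t) + 2 * t with hu_def
    have hu0 : 0 < u := by positivity
    set l : ℝ := u / (2 * (N + u)) with hl_def
    have hNu : 0 < N + u := by linarith
    have hl : l < 1 / 2 := by
      rw [hl_def, div_lt_iff₀ (by positivity)]
      linarith
    have hl0 : 0 ≤ l := by positivity
    set X2 : Fin n → Ω → ℝ := fun i => (fun x : ℝ => x ^ 2) ∘ Y i with hX2_def
    have hX2m : ∀ i, Measurable (X2 i) := fun i => (measurable_id.pow_const 2).comp (hYm i)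
    have hindep2 : iIndepFun X2 μ :=
      hindepY.comp _ (fun _ => measurable_id.pow_const 2)
    have h_int : ∀ i, Integrable (fun ω => exp (l * X2 i ω)) μ := by
      intro i
      have h1 := LM_integrable_exp_sq hl
      rw [← hmapY i] at h1
      exact (integrable_map_measure
        (Continuous.aestronglyMeasurable (by continuity)) ((hYm i).aemeasurable)).mp h1
    have hmgf : ∀ i, mgf (X2 i) μ l = (Real.sqrt (1 - 2 * l))⁻¹ := by
      intro i
      have h1 : mgf (X2 i) μ l = ∫ x, exp (l * x ^ 2) ∂(Measure.map (Y i) μ) := by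
        rw [integral_map ((hYm i).aemeasurable)
          (Continuous.aestronglyMeasurable (by continuity))]
        rfl
      rw [h1, hmapY i, LM_integral_exp_sq hl]
    have h_intS : Integrable (fun ω => exp (l * (∑ i, X2 i) ω)) μ :=
      hindep2.integrable_exp_mul_sum hX2m (fun i _ => h_int i)
    have hmgfS : mgf (∑ i, X2 i) μ l = ((Real.sqrt (1 - 2 * l))⁻¹) ^ n := by
      rw [hindep2.mgf_sum hX2m Finset.univ]
      simp [hmgf]
    have hcher := measure_ge_le_exp_mul_mgf (μ := μ) (X := ∑ i, X2 i) (N + u) hl0 h_intS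
    rw [hmgfS] at hcher
    have hbound := LM_calc hN ht hu_def n rfl
    have hfinal : (μ {ω | N + u ≤ (∑ i, X2 i) ω}).toReal ≤ exp (-t) := by
      calc (μ {ω | N + u ≤ (∑ i, X2 i) ω}).toReal
          ≤ exp (-l * (N + u)) * ((Real.sqrt (1 - 2 * l))⁻¹) ^ n := hcher
        _ ≤ exp (-t) := by rw [hl_def] at *; exact hbound
    have hseteq : μ {ω | (n : ℝ) + 2 * Real.sqrt (n * t) + 2 * t ≤ ∑ i, (X i ω) ^ 2}
        = μ {ω | N + u ≤ (∑ i, X2 i) ω} := by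
      apply measure_congr
      filter_upwards [ae_all_iff.2 hae] with ω hω
      have hsum : ∑ i, (X i ω) ^ 2 = (∑ i, X2 i) ω := by
        rw [Finset.sum_apply]
        exact Finset.sum_congr rfl fun i _ => by rw [hω i]; rfl
      show ((n : ℝ) + 2 * Real.sqrt (n * t) + 2 * t ≤ ∑ i, (X i ω) ^ 2)
          = (N + u ≤ (∑ i, X2 i) ω)
      rw [hsum, hu_def, hN_def, eq_iff_iff]
      constructor <;> intro <;> linarith
    rw [hseteq]
    calc μ {ω | N + u ≤ (∑ i, X2 i) ω}
        = ENNReal.ofReal ((μ {ω | N + u ≤ (∑ i, X2 i) ω}).toReal) :=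
          (ENNReal.ofReal_toReal (measure_ne_top μ _)).symm
      _ ≤ ENNReal.ofReal (exp (-t)) := ENNReal.ofReal_le_ofReal hfinal
  refine ⟨key, le_trans (measure_mono ?_) key⟩
  intro ω hω
  simp only [Set.mem_setOf_eq] at hω ⊢
  linarith
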